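/- Let u and v be twins in a graph G, i.e., N(u) = N(v) and d(u) = d(v) = 3, with u and v non-adjacent. If there is an edge between two vertices of N(u), then there exists a maximum independent set of G containing both u and v (and hence excluding all of N(u)). -/

import Mathlib

variable {V : Type*} [Fintype V] [DecidableEq V]

def IsIndep (G : SimpleGraph V) (I : Finset V) : Prop :=
  ∀ u ∈ I, ∀ v ∈ I, ¬ G.Adj u v

def IsMaxIndep (G : SimpleGraph V) (I : Finset V) : Prop :=
  IsIndep G I ∧ ∀ J : Finset V, IsIndep G J → J.card ≤ I.card

theorem twin_with_edge_in_nbhd (G : SimpleGraph V) [DecidableRel G.Adj] (u v : V)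
    (huv : ¬ G.Adj u v) (hne : u ≠ v)
    (htwin : G.neighborFinset u = G.neighborFinset v)
    (hdeg : G.degree u = 3)
    (hedge : ∃ a ∈ G.neighborFinset u, ∃ b ∈ G.neighborFinset u, G.Adj a b) :
    ∃ I : Finset V, IsMaxIndep G I ∧ u ∈ I ∧ v ∈ I ∧
      ∀ x ∈ G.neighborFinset u, x ∉ I := by
  classical
  obtain ⟨a, ha, b, hb, hab⟩ := hedge
  -- a maximum independent set exists
  obtain ⟨M, hMmem, hMmax⟩ := Finset.exists_max_image
    (Finset.univ.filter (fun I : Finset V => ∀ x ∈ I, ∀ y ∈ I, ¬ G.Adj x y))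
    Finset.card ⟨∅, by simp⟩
  have hMind : IsIndep G M := fun x hx y hy => (Finset.mem_filter.mp hMmem).2 x hx y hy
  have hMmax' : ∀ J : Finset V, IsIndep G J → J.card ≤ M.card := fun J hJ =>
    hMmax J (Finset.mem_filter.mpr ⟨Finset.mem_univ _, hJ⟩)
  set N := G.neighborFinset u with hN
  set I : Finset V := (M \ N) ∪ {u, v} with hI
  have huN : u ∉ N := by simp [hN]
  have hvN : v ∉ N := by simp [hN, huv]
  have hadjN : ∀ z, G.Adj u z → z ∈ N := fun z hz => by simp [hN, hz]
  have hadjNv : ∀ z, G.Adj v z → z ∈ N := fun z hz => by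
    have : z ∈ G.neighborFinset v := by simp [hz]
    rwa [← htwin] at this
  have hIind : IsIndep G I := by
    intro x hx y hy
    simp only [hI, Finset.mem_union, Finset.mem_sdiff, Finset.mem_insert,
      Finset.mem_singleton] at hx hy
    rcases hx with ⟨hxM, hxN⟩ | hx
    · rcases hy with ⟨hyM, hyN⟩ | hy
      · exact hMind x hxM y hyM
      · rcases hy with rfl | rfl
        · intro h; exact hxN (hadjN x h.symm)
        · intro h; exact hxN (hadjNv x h.symm)
    · rcases hy with ⟨hyM, hyN⟩ | hy
      · rcases hx with rfl | rfl
        · intro h; exact hyN (hadjN y h)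
        · intro h; exact hyN (hadjNv y h)
      · rcases hx with rfl | rfl <;> rcases hy with rfl | rfl <;>
          first
          | exact G.irrefl
          | exact huv
          | (intro h; exact huv h.symm)
  have hcard : M.card ≤ I.card := by
    by_cases h : (M ∩ N).Nonempty
    · obtain ⟨w, hw⟩ := h
      have hwM : w ∈ M := (Finset.mem_inter.mp hw).1
      have hwN : w ∈ N := (Finset.mem_inter.mp hw).2
      have huw : G.Adj u w := by
        rw [hN] at hwN; exact (G.mem_neighborFinset u w).mp hwN
      have hvw : G.Adj v w := (G.mem_neighborFinset v w).mp (htwin ▸ hwN)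
      have huM : u ∉ M := fun huM => hMind u huM w hwM huw
      have hvM : v ∉ M := fun hvM => hMind v hvM w hwM hvw
      have hdisj : Disjoint (M \ N) ({u, v} : Finset V) := by
        rw [Finset.disjoint_right]
        intro x hx hx'
        simp only [Finset.mem_insert, Finset.mem_singleton] at hx
        rcases hx with rfl | rfl
        · exact huM (Finset.mem_sdiff.mp hx').1
        · exact hvM (Finset.mem_sdiff.mp hx').1
      have hIcard : I.card = (M \ N).card + 2 := by
        rw [hI, Finset.card_union_of_disjoint hdisj, Finset.card_insert_of_notMem (by simpa),
          Finset.card_singleton]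
      have hinter : (M ∩ N).card ≤ 2 := by
        have hnotboth : a ∉ M ∨ b ∉ M := by
          by_contra hc
          push_neg at hc
          exact hMind a hc.1 b hc.2 hab
      -- M ∩ N ⊆ N.erase a or N.erase b
        have hNcard : N.card = 3 := by rw [hN, SimpleGraph.card_neighborFinset_eq_degree, hdeg]
        rcases hnotboth with haM | hbM
        · have hsub : M ∩ N ⊆ N.erase a := by
            intro x hx
            rw [Finset.mem_erase]
            refine ⟨fun hxa => haM (hxa ▸ (Finset.mem_inter.mp hx).1), (Finset.mem_inter.mp hx).2⟩
          calc (M ∩ N).card ≤ (N.erase a).card := Finset.card_le_card hsub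
            _ = N.card - 1 := Finset.card_erase_of_mem (by rw [hN]; exact ha)
            _ = 2 := by rw [hNcard]
        · have hsub : M ∩ N ⊆ N.erase b := by
            intro x hx
            rw [Finset.mem_erase]
            refine ⟨fun hxb => hbM (hxb ▸ (Finset.mem_inter.mp hx).1), (Finset.mem_inter.mp hx).2⟩
          calc (M ∩ N).card ≤ (N.erase b).card := Finset.card_le_card hsub
            _ = N.card - 1 := Finset.card_erase_of_mem (by rw [hN]; exact hb)
            _ = 2 := by rw [hNcard]
      have hMsplit : (M \ N).card + (M ∩ N).card = M.card := Finset.card_sdiff_add_card_inter M N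
      omega
    · have hsub : M ⊆ I := by
        intro x hx
        rw [hI, Finset.mem_union, Finset.mem_sdiff]
        left
        exact ⟨hx, fun hxN => h ⟨x, Finset.mem_inter.mpr ⟨hx, hxN⟩⟩⟩
      exact Finset.card_le_card hsub
  refine ⟨I, ⟨hIind, fun J hJ => le_trans (hMmax' J hJ) hcard⟩, ?_, ?_, ?_⟩
  · simp [hI]
  · simp [hI]
  · intro x hx hxI
    rw [hI, Finset.mem_union, Finset.mem_sdiff] at hxI
    rcases hxI with ⟨_, hxN⟩ | hx'
    · exact hxN hx
    · simp only [Finset.mem_insert, Finset.mem_singleton] at hx'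
      rcases hx' with rfl | rfl
      · exact huN hx
      · exact hvN hx
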